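/- (Conditional Slutsky's theorem.) Let W_n be random variables converging conditionally in distribution given sigma-algebras F_n to a random variable W with continuous CDF, and let a_n, b_n be random variables with a_n -> 1 and b_n -> 0 in probability. Then a_n W_n + b_n converges conditionally in distribution given F_n to W. -/

import Mathlib

open MeasureTheory ProbabilityTheory Filter

lemma aux_arith {t δ η a b w : ℝ} (hδ : 0 < δ) (hη : η = δ / (|t| + δ + 1))
    (hA : |a - 1| < η) (hB : |b| < η) :
    (w ≤ t - δ → a * w + b ≤ t) ∧ (a * w + b ≤ t → w ≤ t + δ) := by
  have hd : 0 < |t| + δ + 1 := by positivity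
  have h1 : η * (|t| + δ + 1) = δ := by rw [hη]; field_simp
  have hηpos : 0 < η := by rw [hη]; positivity
  have hη1 : η < 1 := by nlinarith [abs_nonneg t]
  obtain ⟨hA1, hA2⟩ := abs_lt.mp hA
  obtain ⟨hB1, hB2⟩ := abs_lt.mp hB
  have hapos : 0 < a := by linarith
  have ht1 : -|t| ≤ t := neg_abs_le t
  have ht2 : t ≤ |t| := le_abs_self t
  constructor
  · intro hw
    have : a * w ≤ a * (t - δ) := by nlinarith
    nlinarith [abs_nonneg t, mul_le_mul_of_nonneg_right hA2.le (abs_nonneg t),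
      neg_abs_le (t * (1 - a)), abs_mul t (1 - a), abs_sub_comm a 1]
  · intro hw
    have key : t + η ≤ a * (t + δ) := by
      nlinarith [neg_abs_le (t * (a - 1)), abs_mul t (a - 1)]
    nlinarith

lemma aux_markov {Ω : Type*} {m : MeasurableSpace Ω} {m0 : MeasurableSpace Ω} (hm : m ≤ m0)
    (μ : Measure Ω) [IsProbabilityMeasure μ] {B : Set Ω} (hB : MeasurableSet B)
    {c : ℝ} (hc : 0 < c) :
    μ {ω | c ≤ (μ⟦B | m⟧) ω} ≤ μ B / ENNReal.ofReal c := by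
  set f : Ω → ℝ := μ⟦B | m⟧ with hf
  have hint : Integrable (B.indicator (fun _ => (1:ℝ))) μ :=
    (integrable_const (1:ℝ)).indicator hB
  have hnn : 0 ≤ᵐ[μ] f := condExp_nonneg (Filter.Eventually.of_forall fun ω => by
    classical
    simp only [Set.indicator]
    split <;> norm_num)
  have hfint : Integrable f μ := integrable_condExp
  have hsm : StronglyMeasurable[m] f := stronglyMeasurable_condExp
  have hmf : Measurable[m0] f := (hsm.mono hm).measurable
  have hsub : {ω | c ≤ f ω} ⊆ {ω | ENNReal.ofReal c ≤ ENNReal.ofReal (f ω)} :=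
    fun ω h => ENNReal.ofReal_le_ofReal h
  calc μ {ω | c ≤ f ω} ≤ μ {ω | ENNReal.ofReal c ≤ ENNReal.ofReal (f ω)} := measure_mono hsub
    _ ≤ (∫⁻ ω, ENNReal.ofReal (f ω) ∂μ) / ENNReal.ofReal c :=
        meas_ge_le_lintegral_div (hmf.ennreal_ofReal).aemeasurable
          (ENNReal.ofReal_pos.mpr hc).ne' ENNReal.ofReal_ne_top
    _ = ENNReal.ofReal (∫ ω, f ω ∂μ) / ENNReal.ofReal c := by
        rw [ofReal_integral_eq_lintegral_ofReal hfint hnn]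
    _ = μ B / ENNReal.ofReal c := by
        have h2 := integral_condExp (μ := μ) (f := B.indicator fun _ => (1:ℝ)) hm
        have h3 : ∫ x, B.indicator (fun _ => (1:ℝ)) x ∂μ = (μ B).toReal := by
          exact integral_indicator_one (μ := μ) hB
        rw [hf, h2, h3, ENNReal.ofReal_toReal (measure_ne_top μ B)]

lemma ind_le_ind_add {Ω : Type*} (s u B : Set Ω) (ω : Ω) (h : ω ∉ B → ω ∈ s → ω ∈ u) :
    s.indicator (fun _ => (1:ℝ)) ω ≤ u.indicator (fun _ => (1:ℝ)) ω
      + B.indicator (fun _ => (1:ℝ)) ω := by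
  classical
  by_cases hB : ω ∈ B
  · rw [Set.indicator_of_mem hB]
    have h1 : s.indicator (fun _ => (1:ℝ)) ω ≤ 1 := by by_cases hs : ω ∈ s <;> simp [hs]
    have h2 := Set.indicator_nonneg (s := u) (f := fun _ => (1:ℝ)) (by simp) ω
    linarith
  · by_cases hs : ω ∈ s
    · simp [Set.indicator, hs, h hB hs, hB]
    · simp only [Set.indicator_of_notMem hs]
      have := Set.indicator_nonneg (s := u) (f := fun _ => (1:ℝ)) (by simp) ω
      have := Set.indicator_nonneg (s := B) (f := fun _ => (1:ℝ)) (by simp) ω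
      linarith

lemma aux_ce {Ω : Type*} {m : MeasurableSpace Ω} {m0 : MeasurableSpace Ω} (_hm : m ≤ m0)
    (μ : Measure Ω) [IsProbabilityMeasure μ]
    {s u B : Set Ω} (hs : MeasurableSet s) (hu : MeasurableSet u) (hB : MeasurableSet B)
    (h : ∀ ω, ω ∉ B → ω ∈ s → ω ∈ u) :
    ∀ᵐ ω ∂μ, (μ⟦s | m⟧) ω ≤ (μ⟦u | m⟧) ω + (μ⟦B | m⟧) ω := by
  have hints : Integrable (s.indicator fun _ => (1:ℝ)) μ := (integrable_const 1).indicator hs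
  have hintu : Integrable (u.indicator fun _ => (1:ℝ)) μ := (integrable_const 1).indicator hu
  have hintB : Integrable (B.indicator fun _ => (1:ℝ)) μ := (integrable_const 1).indicator hB
  have h1 : (s.indicator fun _ => (1:ℝ)) ≤ᵐ[μ]
      (u.indicator fun _ => (1:ℝ)) + (B.indicator fun _ => (1:ℝ)) :=
    Filter.Eventually.of_forall (fun ω => ind_le_ind_add s u B ω (h ω))
  have h2 := condExp_mono (m := m) hints (hintu.add hintB) h1
  have h3 := condExp_add (m := m) (μ := μ) hintu hintB
  filter_upwards [h2, h3] with ω h2' h3'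
  exact h2'.trans (le_of_eq (by rw [h3']; rfl))

/-- Conditional Slutsky's theorem: if `Wₙ | Fₙ` converges conditionally in distribution to
`W` with continuous CDF, `aₙ → 1` and `bₙ → 0` in probability, then `aₙ Wₙ + bₙ | Fₙ`
converges conditionally in distribution to `W`. -/
theorem stmt_7 {Ω : Type*} {m0 : MeasurableSpace Ω} (μ : Measure Ω) [IsProbabilityMeasure μ]
    (W : ℕ → Ω → ℝ) (hW : ∀ n, Measurable (W n))
    (a b : ℕ → Ω → ℝ) (ha : ∀ n, Measurable (a n)) (hb : ∀ n, Measurable (b n))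
    (F : ℕ → MeasurableSpace Ω) (hF : ∀ n, F n ≤ m0)
    (Wlim : Ω → ℝ) (hWlim : Measurable Wlim)
    (hcont : Continuous (fun t : ℝ => (μ {ω | Wlim ω ≤ t}).toReal))
    (hconv : ∀ t : ℝ, ∀ ε : ℝ, 0 < ε →
      Tendsto (fun n => μ {ω | ε ≤
          |(μ⟦{ω' | W n ω' ≤ t} | F n⟧) ω - (μ {ω' | Wlim ω' ≤ t}).toReal|})
        atTop (nhds 0))
    (ha1 : ∀ ε : ℝ, 0 < ε → Tendsto (fun n => μ {ω | ε ≤ |a n ω - 1|}) atTop (nhds 0))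
    (hb0 : ∀ ε : ℝ, 0 < ε → Tendsto (fun n => μ {ω | ε ≤ |b n ω|}) atTop (nhds 0)) :
    ∀ t : ℝ, ∀ ε : ℝ, 0 < ε →
      Tendsto (fun n => μ {ω | ε ≤
          |(μ⟦{ω' | a n ω' * W n ω' + b n ω' ≤ t} | F n⟧) ω - (μ {ω' | Wlim ω' ≤ t}).toReal|})
        atTop (nhds 0) := by
  intro t ε hε
  -- choose δ from continuity of the CDF at t
  obtain ⟨δ0, hδ0, hball⟩ := Metric.continuousAt_iff.mp (hcont.continuousAt (x := t))
    (ε/3) (by linarith)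
  set δ : ℝ := δ0 / 2 with hδdef
  have hδ : 0 < δ := by positivity
  have hFp : |(μ {ω | Wlim ω ≤ t + δ}).toReal - (μ {ω | Wlim ω ≤ t}).toReal| < ε/3 := by
    have := hball (x := t + δ) (by
      rw [Real.dist_eq, (by ring : t + δ - t = δ), abs_of_pos hδ]
      rw [hδdef]; linarith)
    rw [Real.dist_eq] at this; exact this
  have hFm : |(μ {ω | Wlim ω ≤ t - δ}).toReal - (μ {ω | Wlim ω ≤ t}).toReal| < ε/3 := by
    have := hball (x := t - δ) (by
      rw [Real.dist_eq, (by ring : t - δ - t = -δ), abs_neg, abs_of_pos hδ]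
      rw [hδdef]; linarith)
    rw [Real.dist_eq] at this; exact this
  set η : ℝ := δ / (|t| + δ + 1) with hηdef
  have hηpos : 0 < η := by positivity
  -- the bad sets
  set Bs : ℕ → Set Ω := fun n => {ω | η ≤ |a n ω - 1|} ∪ {ω | η ≤ |b n ω|} with hBsdef
  have hBmeas : ∀ n, MeasurableSet (Bs n) := fun n =>
    (measurableSet_le measurable_const ((ha n).sub measurable_const).abs).union
      (measurableSet_le measurable_const (hb n).abs)
  have hSmeas : ∀ n, MeasurableSet {ω | a n ω * W n ω + b n ω ≤ t} := fun n =>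
    measurableSet_le (((ha n).mul (hW n)).add (hb n)) measurable_const
  have hgood : ∀ n ω, ω ∉ Bs n → |a n ω - 1| < η ∧ |b n ω| < η := by
    intro n ω hω
    simp only [hBsdef, Set.mem_union, Set.mem_setOf_eq, not_or, not_le] at hω
    exact hω
  -- conditional expectation sandwich
  have hs1 : ∀ n, ∀ᵐ ω ∂μ, (μ⟦{ω' | W n ω' ≤ t - δ} | F n⟧) ω ≤
      (μ⟦{ω' | a n ω' * W n ω' + b n ω' ≤ t} | F n⟧) ω + (μ⟦Bs n | F n⟧) ω := by
    intro n
    refine aux_ce (hF n) μ (measurableSet_le (hW n) measurable_const) (hSmeas n) (hBmeas n) ?_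
    intro ω hω hmem
    obtain ⟨h1, h2⟩ := hgood n ω hω
    exact (aux_arith hδ hηdef h1 h2).1 hmem
  have hs2 : ∀ n, ∀ᵐ ω ∂μ, (μ⟦{ω' | a n ω' * W n ω' + b n ω' ≤ t} | F n⟧) ω ≤
      (μ⟦{ω' | W n ω' ≤ t + δ} | F n⟧) ω + (μ⟦Bs n | F n⟧) ω := by
    intro n
    refine aux_ce (hF n) μ (hSmeas n) (measurableSet_le (hW n) measurable_const) (hBmeas n) ?_
    intro ω hω hmem
    obtain ⟨h1, h2⟩ := hgood n ω hω
    exact (aux_arith hδ hηdef h1 h2).2 hmem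
  have hC0 : ∀ n, 0 ≤ᵐ[μ] μ⟦Bs n | F n⟧ := fun n =>
    condExp_nonneg (Filter.Eventually.of_forall (Set.indicator_nonneg (by simp)))
  -- event inclusion and union bound
  have hincl : ∀ n, μ {ω | ε ≤
        |(μ⟦{ω' | a n ω' * W n ω' + b n ω' ≤ t} | F n⟧) ω - (μ {ω' | Wlim ω' ≤ t}).toReal|} ≤
      μ {ω | ε/5 ≤ |(μ⟦{ω' | W n ω' ≤ t + δ} | F n⟧) ω - (μ {ω' | Wlim ω' ≤ t + δ}).toReal|}
      + (μ {ω | ε/5 ≤ |(μ⟦{ω' | W n ω' ≤ t - δ} | F n⟧) ω - (μ {ω' | Wlim ω' ≤ t - δ}).toReal|}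
        + μ {ω | ε/5 ≤ (μ⟦Bs n | F n⟧) ω}) := by
    intro n
    refine le_trans (measure_mono_ae ?_) (le_trans (measure_union_le _ _)
      (add_le_add_right (measure_union_le _ _) _))
    filter_upwards [hs1 n, hs2 n, hC0 n] with ω h1 h2 h3
    intro hω
    have hω' : ε ≤ |(μ⟦{ω' | a n ω' * W n ω' + b n ω' ≤ t} | F n⟧) ω
        - (μ {ω' | Wlim ω' ≤ t}).toReal| := hω
    by_cases k1 : ε/5 ≤ |(μ⟦{ω' | W n ω' ≤ t + δ} | F n⟧) ω - (μ {ω' | Wlim ω' ≤ t + δ}).toReal|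
    · exact Set.mem_union_left _ k1
    by_cases k2 : ε/5 ≤ |(μ⟦{ω' | W n ω' ≤ t - δ} | F n⟧) ω - (μ {ω' | Wlim ω' ≤ t - δ}).toReal|
    · exact Set.mem_union_right _ (Set.mem_union_left _ k2)
    by_cases k3 : ε/5 ≤ (μ⟦Bs n | F n⟧) ω
    · exact Set.mem_union_right _ (Set.mem_union_right _ k3)
    exfalso
    push_neg at k1 k2 k3
    obtain ⟨d1, d2⟩ := abs_lt.mp k1
    obtain ⟨e1, e2⟩ := abs_lt.mp k2
    obtain ⟨f1, f2⟩ := abs_lt.mp hFp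
    obtain ⟨g1, g2⟩ := abs_lt.mp hFm
    exact absurd hω' (not_le.mpr (abs_lt.mpr ⟨by linarith, by linarith⟩))
  -- Markov bound for the bad-set conditional probability
  have hmark : ∀ n, μ {ω | ε/5 ≤ (μ⟦Bs n | F n⟧) ω} ≤
      (μ {ω | η ≤ |a n ω - 1|} + μ {ω | η ≤ |b n ω|}) / ENNReal.ofReal (ε/5) := by
    intro n
    refine le_trans (aux_markov (hF n) μ (hBmeas n) (by linarith)) ?_
    exact ENNReal.div_le_div_right (measure_union_le _ _) _
  -- limits
  have hlim1 := hconv (t + δ) (ε/5) (by linarith)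
  have hlim2 := hconv (t - δ) (ε/5) (by linarith)
  have hlim3 : Tendsto (fun n =>
      (μ {ω | η ≤ |a n ω - 1|} + μ {ω | η ≤ |b n ω|}) / ENNReal.ofReal (ε/5))
      atTop (nhds 0) := by
    have h := (ha1 η hηpos).add (hb0 η hηpos)
    rw [add_zero] at h
    have := ENNReal.Tendsto.div_const h
      (Or.inr (ENNReal.ofReal_pos.mpr (by linarith : (0:ℝ) < ε/5)).ne')
    simpa using this
  have hsum : Tendsto (fun n =>
      μ {ω | ε/5 ≤ |(μ⟦{ω' | W n ω' ≤ t + δ} | F n⟧) ω - (μ {ω' | Wlim ω' ≤ t + δ}).toReal|}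
      + (μ {ω | ε/5 ≤ |(μ⟦{ω' | W n ω' ≤ t - δ} | F n⟧) ω - (μ {ω' | Wlim ω' ≤ t - δ}).toReal|}
        + (μ {ω | η ≤ |a n ω - 1|} + μ {ω | η ≤ |b n ω|}) / ENNReal.ofReal (ε/5)))
      atTop (nhds 0) := by
    have := hlim1.add (hlim2.add hlim3)
    simpa using this
  refine tendsto_of_tendsto_of_tendsto_of_le_of_le tendsto_const_nhds hsum
    (fun n => zero_le) ?_
  intro n
  exact le_trans (hincl n) (add_le_add_right (add_le_add_right (hmark n) _) _)
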